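/- On A = {a,b,c} with k = 2, let f(1,1) = 1, f(2,2) = 2, and f(x,y) = 0 otherwise, and let sc(W,S) = f(|W∩S|,|S|). Let U = {a,b}, V = {a,c}, and let P be a probability distribution over subsets of A that is d-monotonic with ground truth U for some majority-concentric distance metric d. Then E_{S∼P}[sc(U,S) − sc(V,S)] = 2P[{a,b}] − 2P[{a,c}] + P[{b}] − P[{c}] > 0. -/
import Mathlib

/-- The scoring function: `f 1 1 = 1`, `f 2 2 = 2`, `0` otherwise. -/
def fEx : ℕ → ℕ → ℝ
  | 1, 1 => 1
  | 2, 2 => 2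
  | _, _ => 0

/-- `d` is a distance metric on subsets. -/
def IsMetric {α : Type*} (d : Finset α → Finset α → ℝ) : Prop :=
  (∀ X Y, 0 ≤ d X Y) ∧ (∀ X Y, d X Y = 0 ↔ X = Y) ∧
  (∀ X Y, d X Y = d Y X) ∧ (∀ X Y Z, d X Z ≤ d X Y + d Y Z)

/-- `d` is majority-concentric. -/
def IsMajorityConcentric {α : Type*} [Fintype α] [DecidableEq α]
    (d : Finset α → Finset α → ℝ) : Prop :=
  ∀ (U : Finset α) (a b : α), a ∈ U → b ∉ U → ∀ t : ℝ, 0 ≤ t →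
    {S : Finset α | b ∈ S ∧ a ∉ S ∧ d U S ≤ t}.ncard ≤
      {S : Finset α | a ∈ S ∧ b ∉ S ∧ d U S ≤ t}.ncard

/-- `P` is a probability distribution over subsets. -/
def IsProbDist {α : Type*} [Fintype α] [DecidableEq α] (P : Finset α → ℝ) : Prop :=
  (∀ S, 0 ≤ P S) ∧ (∑ S : Finset α, P S = 1)

/-- `P` is `d`-monotonic with ground truth `U`. -/
def IsMonotonicNoise {α : Type*} (d : Finset α → Finset α → ℝ) (U : Finset α)
    (P : Finset α → ℝ) : Prop :=
  ∀ S₁ S₂ : Finset α, P S₂ < P S₁ ↔ d U S₁ < d U S₂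

theorem stmt17 (d : Finset (Fin 3) → Finset (Fin 3) → ℝ)
    (hmetric : IsMetric d) (hmc : IsMajorityConcentric d)
    (P : Finset (Fin 3) → ℝ) (hP : IsProbDist P)
    (hmono : IsMonotonicNoise d ({0, 1} : Finset (Fin 3)) P) :
    (∑ S : Finset (Fin 3),
        (fEx (({0, 1} : Finset (Fin 3)) ∩ S).card S.card -
          fEx (({0, 2} : Finset (Fin 3)) ∩ S).card S.card) * P S =
      2 * P {0, 1} - 2 * P {0, 2} + P {1} - P {2}) ∧
    0 < ∑ S : Finset (Fin 3),
        (fEx (({0, 1} : Finset (Fin 3)) ∩ S).card S.card -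
          fEx (({0, 2} : Finset (Fin 3)) ∩ S).card S.card) * P S := by
  set U : Finset (Fin 3) := {0, 1} with hU
  -- Part 1: the explicit value of the sum.
  have heq : (∑ S : Finset (Fin 3),
        (fEx (({0, 1} : Finset (Fin 3)) ∩ S).card S.card -
          fEx (({0, 2} : Finset (Fin 3)) ∩ S).card S.card) * P S =
      2 * P {0, 1} - 2 * P {0, 2} + P {1} - P {2}) := by
    have h : (Finset.univ : Finset (Finset (Fin 3))) =
        {∅, {0}, {1}, {2}, {0,1}, {0,2}, {1,2}, {0,1,2}} := by decide
    rw [h, Finset.sum_insert (by decide), Finset.sum_insert (by decide),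
      Finset.sum_insert (by decide), Finset.sum_insert (by decide),
      Finset.sum_insert (by decide), Finset.sum_insert (by decide),
      Finset.sum_insert (by decide), Finset.sum_singleton]
    norm_num [show (({0,1} : Finset (Fin 3)) ∩ ∅) = ∅ from by decide,
      show (({0,2} : Finset (Fin 3)) ∩ ∅) = ∅ from by decide,
      show (({0,1} : Finset (Fin 3)) ∩ {0}) = {0} from by decide,
      show (({0,2} : Finset (Fin 3)) ∩ {0}) = {0} from by decide,
      show (({0,1} : Finset (Fin 3)) ∩ {1}) = {1} from by decide,
      show (({0,2} : Finset (Fin 3)) ∩ {1}) = ∅ from by decide,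
      show (({0,1} : Finset (Fin 3)) ∩ {2}) = ∅ from by decide,
      show (({0,2} : Finset (Fin 3)) ∩ {2}) = {2} from by decide,
      show (({0,1} : Finset (Fin 3)) ∩ {0,1}) = {0,1} from by decide,
      show (({0,2} : Finset (Fin 3)) ∩ {0,1}) = {0} from by decide,
      show (({0,1} : Finset (Fin 3)) ∩ {0,2}) = {0} from by decide,
      show (({0,2} : Finset (Fin 3)) ∩ {0,2}) = {0,2} from by decide,
      show (({0,1} : Finset (Fin 3)) ∩ {1,2}) = {1} from by decide,
      show (({0,2} : Finset (Fin 3)) ∩ {1,2}) = {2} from by decide,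
      show (({0,1} : Finset (Fin 3)) ∩ {0,1,2}) = {0,1} from by decide,
      show (({0,2} : Finset (Fin 3)) ∩ {0,1,2}) = {0,2} from by decide,
      show (({0,1} : Finset (Fin 3))).card = 2 from by decide,
      show (({0,2} : Finset (Fin 3))).card = 2 from by decide,
      show (({1,2} : Finset (Fin 3))).card = 2 from by decide,
      show (({0,1,2} : Finset (Fin 3))).card = 3 from by decide,
      fEx]
    ring
  refine ⟨heq, ?_⟩
  rw [heq]
  -- Basic facts from the metric axioms and monotonicity.
  have hd0 : d U U = 0 := (hmetric.2.1 U U).mpr rfl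
  have hdpos : ∀ S, S ≠ U → 0 < d U S := by
    intro S hS
    rcases lt_or_eq_of_le (hmetric.1 U S) with h | h
    · exact h
    · exact absurd ((hmetric.2.1 U S).mp h.symm).symm hS
  have hPlt : ∀ S, S ≠ U → P S < P U := by
    intro S hS
    exact (hmono U S).mpr (hd0 ▸ hdpos S hS)
  have hle : ∀ S₁ S₂, d U S₁ ≤ d U S₂ → P S₂ ≤ P S₁ := by
    intro S₁ S₂ h
    by_contra hc
    exact absurd ((hmono S₂ S₁).mp (lt_of_not_ge hc)) (not_lt.mpr h)
  -- Apply majority-concentricity with a = 1, b = 2, t = max of the two distances.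
  set t : ℝ := max (d U {2}) (d U {0, 2}) with ht
  have ht0 : 0 ≤ t := le_trans (hmetric.1 U {2}) (le_max_left _ _)
  have hmc' := hmc U 1 2 (by decide) (by decide) t ht0
  have hBsub : ({({2} : Finset (Fin 3)), {0, 2}} : Set (Finset (Fin 3))) ⊆
      {S : Finset (Fin 3) | (2 : Fin 3) ∈ S ∧ (1 : Fin 3) ∉ S ∧ d U S ≤ t} := by
    rintro S (rfl | rfl)
    · exact ⟨by decide, by decide, le_max_left _ _⟩
    · exact ⟨by decide, by decide, le_max_right _ _⟩
  have hB2 : 2 ≤ {S : Finset (Fin 3) | (2 : Fin 3) ∈ S ∧ (1 : Fin 3) ∉ S ∧ d U S ≤ t}.ncard := by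
    have := Set.ncard_le_ncard hBsub (Set.toFinite _)
    rwa [Set.ncard_pair (by decide : ({2} : Finset (Fin 3)) ≠ {0, 2})] at this
  have hA2 : 2 ≤ {S : Finset (Fin 3) | (1 : Fin 3) ∈ S ∧ (2 : Fin 3) ∉ S ∧ d U S ≤ t}.ncard :=
    le_trans hB2 hmc'
  -- Deduce d U {1} ≤ t.
  have hd1 : d U {1} ≤ t := by
    by_contra hc
    have hsub : {S : Finset (Fin 3) | (1 : Fin 3) ∈ S ∧ (2 : Fin 3) ∉ S ∧ d U S ≤ t} ⊆
        ({({0, 1} : Finset (Fin 3))} : Set (Finset (Fin 3))) := by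
      rintro S ⟨h1, h2, h3⟩
      have key : ∀ T : Finset (Fin 3), (1 : Fin 3) ∈ T → (2 : Fin 3) ∉ T →
          T = {1} ∨ T = ({0, 1} : Finset (Fin 3)) := by decide
      have : S = {1} ∨ S = ({0, 1} : Finset (Fin 3)) := key S h1 h2
      rcases this with rfl | rfl
      · exact absurd h3 hc
      · rfl
    have := Set.ncard_le_ncard hsub (Set.toFinite _)
    rw [Set.ncard_singleton] at this
    omega
  -- So P {1} ≥ min (P {2}) (P {0,2}).
  have h02 : P {0, 2} < P U := hPlt {0, 2} (by decide)
  have h2 : P {2} < P U := hPlt {2} (by decide)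
  rcases max_cases (d U {2}) (d U {0, 2}) with ⟨hm, _⟩ | ⟨hm, _⟩
  · have := hle {1} {2} (by rw [← hm]; exact hd1)
    simp only [hU] at h02 h2 ⊢
    linarith
  · have := hle {1} {0, 2} (by rw [← hm]; exact hd1)
    simp only [hU] at h02 h2 ⊢
    linarith
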